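/- Let l be the list (n repeated n+1 times) followed by (1, 2, ..., n). Then the expressed permutation P obtained by first-occurrence deduplication of l is (n, 1, 2, ..., n−1), and a single deletion, insertion, or substitution of one element of l cannot make P equal to the identity (1, 2, ..., n), for n ≥ 3. -/

import Mathlib

/-- First-occurrence deduplication: keep only the first occurrence of each element. -/
def expressList : List ℕ → List ℕ
  | [] => []
  | a :: l => a :: expressList (l.filter (· ≠ a))
termination_by l => l.length
decreasing_by
  first
  | simpa using Nat.lt_succ_of_le (List.length_filter_le _ _)
  | (simp; exact (List.length_filter_le _ _).trans_eq List.length_attach)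
  | (simp; exact Nat.lt_succ_of_le ((List.length_filter_le _ _).trans_eq List.length_attach))

/-- The identity permutation `(1, 2, …, n)` as a list. -/
def idList (n : ℕ) : List ℕ := (List.range n).map (· + 1)

/-- The worst-case list: `n` repeated `n + 1` times, followed by `1, 2, …, n`. -/
def worstList1 (n : ℕ) : List ℕ := List.replicate (n + 1) n ++ idList n

lemma expressList_cons (a : ℕ) (l : List ℕ) :
    expressList (a :: l) = a :: expressList (l.filter (· ≠ a)) := by rw [expressList]

lemma head?_expressList (l : List ℕ) : (expressList l).head? = l.head? := by
  cases l <;> simp [expressList]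

lemma idList_succ (m : ℕ) : idList (m + 1) = idList m ++ [m + 1] := by
  simp [idList, List.range_succ]

lemma idList_head (n : ℕ) (h : 1 ≤ n) : (idList n).head? = some 1 := by
  obtain ⟨m, rfl⟩ := Nat.exists_eq_add_of_le h
  rw [Nat.add_comm] at *
  simp [idList, List.range_succ_eq_map]

example (m : ℕ) : (List.range (1 + m)).head? = some 0 := by
  rw [Nat.add_comm, List.range_succ_eq_map]; simp

lemma mem_idList_le {n x : ℕ} (h : x ∈ idList n) : x ≤ n := by
  simp [idList] at h; omega

lemma expressList_nodup {l : List ℕ} (h : l.Nodup) : expressList l = l := by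
  induction l with
  | nil => simp [expressList]
  | cons a l ih =>
    rw [expressList_cons]
    have hf : l.filter (· ≠ a) = l := by
      rw [List.filter_eq_self]
      intro b hb
      have := (List.nodup_cons.mp h).1
      simp only [ne_eq, decide_eq_true_eq]
      rintro rfl; exact this hb
    rw [hf, ih (List.nodup_cons.mp h).2]

lemma idList_nodup (n : ℕ) : (idList n).Nodup :=
  (List.nodup_range (n := n)).map (fun _ _ => by omega)

lemma filter_idList (n m : ℕ) (h : m < n) : (idList m).filter (· ≠ n) = idList m := by
  rw [List.filter_eq_self]
  intro b hb
  have := mem_idList_le hb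
  simp; omega

lemma expressList_worst (n : ℕ) (h : 1 ≤ n) :
    expressList (worstList1 n) = n :: idList (n - 1) := by
  obtain ⟨m, rfl⟩ := Nat.exists_eq_add_of_le h
  rw [Nat.add_comm] at *
  simp only [Nat.add_sub_cancel]
  rw [worstList1, List.replicate_succ, List.cons_append, expressList_cons]
  congr 1
  rw [List.filter_append, List.filter_replicate,
    idList_succ, List.filter_append, filter_idList _ _ (by omega)]
  simp only [List.filter_cons, List.filter_nil, ne_eq, not_true_eq_false, decide_false,
    Bool.false_eq_true, if_false, List.nil_append, List.append_nil]
  exact expressList_nodup (idList_nodup m)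

lemma idList_one (n : ℕ) (h : 2 ≤ n) : (idList n)[1]? = some 2 := by
  have h1 : (1:ℕ) < n := by omega
  simp [idList, List.getElem?_range, h1]

lemma lemD (n : ℕ) (hn : 3 ≤ n) (L : List ℕ) (hL : L.head? = some n) :
    expressList (1 :: L) ≠ idList n := by
  cases L with
  | nil => simp at hL
  | cons a L' =>
    simp only [List.head?_cons, Option.some.injEq] at hL
    subst hL
    intro heq
    rw [expressList_cons] at heq
    rw [List.filter_cons, if_pos (by simp; omega)] at heq
    rw [expressList_cons] at heq
    have := congrArg (·[1]?) heq
    simp only [List.getElem?_cons_succ, List.getElem?_cons_zero] at this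
    rw [idList_one a (by omega)] at this
    simp at this
    omega

lemma head?_eraseIdx_cons_cons (a : ℕ) (t : List ℕ) (i : ℕ) :
    ((a :: a :: t).eraseIdx i).head? = some a := by
  cases i with
  | zero => simp
  | succ i => simp [List.eraseIdx_cons_succ]

theorem worstList1_hard (n : ℕ) (hn : 3 ≤ n) :
    expressList (worstList1 n) = n :: idList (n - 1) ∧
    ∀ l' : List ℕ,
      ((∃ i, l' = (worstList1 n).eraseIdx i) ∨
       (∃ i x, 1 ≤ x ∧ x ≤ n ∧ l' = (worstList1 n).insertIdx i x) ∨
       (∃ i x, 1 ≤ x ∧ x ≤ n ∧ l' = (worstList1 n).set i x)) →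
      expressList l' ≠ idList n := by
  have hw : worstList1 n = n :: n :: (List.replicate (n-1) n ++ idList n) := by
    rw [worstList1]
    have h2 : n + 1 = (n - 1) + 1 + 1 := by omega
    rw [h2, List.replicate_succ, List.replicate_succ]
    simp
  refine ⟨expressList_worst n (by omega), ?_⟩
  rintro l' h heq
  have h1 : l'.head? = some 1 := by
    rw [← head?_expressList, heq]; exact idList_head n (by omega)
  rcases h with ⟨i, rfl⟩ | ⟨i, x, hx1, hx2, rfl⟩ | ⟨i, x, hx1, hx2, rfl⟩
  · rw [hw, head?_eraseIdx_cons_cons] at h1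
    simp at h1; omega
  · cases i with
    | zero =>
      rw [List.insertIdx_zero] at h1 heq
      simp only [List.head?_cons, Option.some.injEq] at h1
      subst h1
      exact lemD n hn _ (by rw [hw]; simp) heq
    | succ i =>
      rw [hw, List.insertIdx_succ_cons] at h1
      simp at h1; omega
  · cases i with
    | zero =>
      rw [hw, List.set_cons_zero] at h1 heq
      simp only [List.head?_cons, Option.some.injEq] at h1
      subst h1
      exact lemD n hn _ (by simp) heq
    | succ i =>
      rw [hw, List.set_cons_succ] at h1
      simp at h1; omega
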